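/- For each x ∈ S(dyadic) there exists a unique graph G ∈ 𝒢* such that φ_G(V_G^r) = x (existence and uniqueness of the ROBDD representing x). -/

import Mathlib

/-- The class `𝒢` of level-labeled rooted DAGs used to represent data strings:
finitely many vertices, a root at level 1, exactly two terminal vertices `T0, T1` at a
common level `k+1`, every nonterminal vertex has out-edges labeled `0` and `1` ending at
distinct vertices, levels strictly increase along edges, and every vertex is reachable
from the root.  (A vertex is terminal iff it equals `T0` or `T1`; `succ0, succ1` are
only meaningful on nonterminal vertices.) -/
structure BDD (V : Type) [Fintype V] [DecidableEq V] where
  k : ℕ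
  root : V
  T0 : V
  T1 : V
  succ0 : V → V
  succ1 : V → V
  level : V → ℕ
  k_pos : 1 ≤ k
  T0_ne_T1 : T0 ≠ T1
  root_level : level root = 1
  T0_level : level T0 = k + 1
  T1_level : level T1 = k + 1
  level_le : ∀ v, level v ≤ k + 1
  succ_ne : ∀ v, v ≠ T0 → v ≠ T1 → succ0 v ≠ succ1 v
  level_lt_succ0 : ∀ v, v ≠ T0 → v ≠ T1 → level v < level (succ0 v)
  level_lt_succ1 : ∀ v, v ≠ T0 → v ≠ T1 → level v < level (succ1 v)
  reachable : ∀ v, Relation.ReflTransGen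
    (fun a b => a ≠ T0 ∧ a ≠ T1 ∧ (b = succ0 a ∨ b = succ1 a)) root v

/-- `φ` is the canonical string map of `G`: `φ(T0) = 0`, `φ(T1) = 1`, and for a
nonterminal vertex `V` with `0`- and `1`-successors `V₀, V₁`,
`φ(V) = φ(V₀)^{2^{L(V₀)−L(V)−1}} φ(V₁)^{2^{L(V₁)−L(V)−1}}`
(the defining recursion of the canonical map; it determines `φ` uniquely). -/
def IsPhi {V : Type} [Fintype V] [DecidableEq V] (G : BDD V) (φ : V → List Bool) : Prop :=
  φ G.T0 = [false] ∧ φ G.T1 = [true] ∧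
  ∀ v, v ≠ G.T0 → v ≠ G.T1 →
    φ v = (List.replicate (2 ^ (G.level (G.succ0 v) - G.level v - 1)) (φ (G.succ0 v))).flatten
        ++ (List.replicate (2 ^ (G.level (G.succ1 v) - G.level v - 1)) (φ (G.succ1 v))).flatten

/-- `S(dyadic)`. -/
def SDyadic (x : List Bool) : Prop :=
  (∃ k : ℕ, x.length = 2 ^ k) ∧
    x.take (x.length / 2) ≠ x.drop (x.length / 2) ∧ false ∈ x ∧ true ∈ x

/-- An isomorphism of graphs in `𝒢*`: a bijection of vertex sets preserving the root,
the two terminals, the labeled edges, and the levels. -/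
def BDDIso {V W : Type} [Fintype V] [DecidableEq V] [Fintype W] [DecidableEq W]
    (G : BDD V) (G' : BDD W) (e : V ≃ W) : Prop :=
  e G.root = G'.root ∧ e G.T0 = G'.T0 ∧ e G.T1 = G'.T1 ∧
  (∀ v, G'.level (e v) = G.level v) ∧
  (∀ v, v ≠ G.T0 → v ≠ G.T1 →
    e (G.succ0 v) = G'.succ0 (e v) ∧ e (G.succ1 v) = G'.succ1 (e v))


namespace ROBP

def rep (n : ℕ) (l : List Bool) : List Bool := (List.replicate n l).flatten

@[simp] lemma rep_length (n : ℕ) (l : List Bool) : (rep n l).length = n * l.length := by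
  induction n with
  | zero => simp [rep]
  | succ n ih =>
    rw [rep, List.replicate_succ, List.flatten_cons, List.length_append, ← rep, ih]
    ring

lemma rep_one (l : List Bool) : rep 1 l = l := by simp [rep]

lemma rep_add (m n : ℕ) (l : List Bool) : rep (m + n) l = rep m l ++ rep n l := by
  rw [rep, List.replicate_add, List.flatten_append]; rfl

def red (s : List Bool) : List Bool :=
  if h : s ≠ [] ∧ s.take (s.length / 2) = s.drop (s.length / 2) then
    red (s.take (s.length / 2))
  else s
termination_by s.length
decreasing_by
  have h1 : 0 < s.length := List.length_pos_iff.mpr h.1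
  simp [List.length_take]
  omega

lemma red_length_le (s : List Bool) : (red s).length ≤ s.length := by
  generalize hn : s.length = n
  induction n using Nat.strong_induction_on generalizing s with
  | _ n ih =>
    subst hn
    rw [red]
    split
    · next h =>
      have h1 : 0 < s.length := List.length_pos_iff.mpr h.1
      have h2 : (s.take (s.length / 2)).length < s.length := by
        simp [List.length_take]; omega
      exact le_trans (ih _ h2 _ rfl) (le_of_lt h2)
    · exact le_refl _

lemma exists_rep_red (s : List Bool) : ∃ i : ℕ, s = rep (2 ^ i) (red s) := by
  generalize hn : s.length = n
  induction n using Nat.strong_induction_on generalizing s with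
  | _ n ih =>
    subst hn
    rw [red]
    split
    · next h =>
      have h1 : 0 < s.length := List.length_pos_iff.mpr h.1
      have h2 : (s.take (s.length / 2)).length < s.length := by
        simp [List.length_take]; omega
      obtain ⟨i, hi⟩ := ih _ h2 _ rfl
      refine ⟨i + 1, ?_⟩
      rw [pow_succ, mul_two, rep_add, ← hi]
      conv_lhs => rw [← List.take_append_drop (s.length / 2) s, ← h.2]
    · exact ⟨0, by simp [rep_one]⟩

lemma red_ne_nil (s : List Bool) (hs : s ≠ []) : red s ≠ [] := by
  obtain ⟨i, hi⟩ := exists_rep_red s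
  intro h
  apply hs
  rw [hi, h]
  simp [rep]

lemma red_eq_self_iff (s : List Bool) :
    red s = s ↔ ¬(s ≠ [] ∧ s.take (s.length / 2) = s.drop (s.length / 2)) := by
  constructor
  · intro hred hcond
    have h1 : 0 < s.length := List.length_pos_iff.mpr hcond.1
    have h2 : (s.take (s.length / 2)).length < s.length := by
      simp [List.length_take]; omega
    have : (red s).length ≤ (s.take (s.length / 2)).length := by
      rw [red, dif_pos hcond]; exact red_length_le _
    rw [hred] at this; omega
  · intro h; rw [red, dif_neg h]

lemma red_cond (s : List Bool) :
    ¬(red s ≠ [] ∧ (red s).take ((red s).length / 2) = (red s).drop ((red s).length / 2)) := by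
  generalize hn : s.length = n
  induction n using Nat.strong_induction_on generalizing s with
  | _ n ih =>
    subst hn
    rw [red]
    split
    · next h =>
      have h1 : 0 < s.length := List.length_pos_iff.mpr h.1
      have h2 : (s.take (s.length / 2)).length < s.length := by
        simp [List.length_take]; omega
      exact ih _ h2 _ rfl
    · next h => exact h

lemma red_red (s : List Bool) : red (red s) = red s := (red_eq_self_iff _).mpr (red_cond s)

lemma take_half_append (A B : List Bool) (h : A.length = B.length) :
    (A ++ B).take ((A ++ B).length / 2) = A := by
  have : (A ++ B).length / 2 = A.length := by simp [List.length_append]; omega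
  rw [this]; exact List.take_left

lemma drop_half_append (A B : List Bool) (h : A.length = B.length) :
    (A ++ B).drop ((A ++ B).length / 2) = B := by
  have : (A ++ B).length / 2 = A.length := by simp [List.length_append]; omega
  rw [this]; exact List.drop_left

lemma red_rep (t : List Bool) (ht : red t = t) (hne : t ≠ []) (a : ℕ) :
    red (rep (2 ^ a) t) = t := by
  induction a with
  | zero => rw [pow_zero, rep_one, ht]
  | succ a ih =>
    have hA : rep (2 ^ (a + 1)) t = rep (2 ^ a) t ++ rep (2 ^ a) t := by
      rw [← rep_add, pow_succ, mul_two]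
    have hl : 0 < t.length := List.length_pos_iff.mpr hne
    have hnil : rep (2 ^ (a + 1)) t ≠ [] := by
      apply List.ne_nil_of_length_pos
      rw [rep_length]; positivity
    rw [red]
    split
    · next h => rw [hA, take_half_append _ _ rfl]; exact ih
    · next h =>
      exact absurd ⟨hnil, by rw [hA, take_half_append _ _ rfl, drop_half_append _ _ rfl]⟩ h

/-- two powers of a reduced string equal implies equal strings -/
lemma red_rep_inj {s t : List Bool} (hs : red s = s) (ht : red t = t)
    (hsn : s ≠ []) (htn : t ≠ []) {a b : ℕ}
    (h : rep (2 ^ a) s = rep (2 ^ b) t) : s = t := by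
  have := congrArg red h
  rwa [red_rep s hs hsn, red_rep t ht htn] at this


def closure (s : List Bool) : Finset (List Bool) :=
  if h : 2 ≤ s.length then
    {s} ∪ closure (red (s.take (s.length / 2))) ∪ closure (red (s.drop (s.length / 2)))
  else {s}
termination_by s.length
decreasing_by
  · have := red_length_le (s.take (s.length / 2))
    simp [List.length_take] at *
    omega
  · have := red_length_le (s.drop (s.length / 2))
    simp [List.length_drop] at *
    omega

lemma self_mem_closure (s : List Bool) : s ∈ closure s := by
  rw [closure]
  split <;> simp

lemma mem_left_closure {s : List Bool} (h : 2 ≤ s.length) :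
    red (s.take (s.length / 2)) ∈ closure s := by
  rw [closure, dif_pos h]
  simp [self_mem_closure]

lemma mem_right_closure {s : List Bool} (h : 2 ≤ s.length) :
    red (s.drop (s.length / 2)) ∈ closure s := by
  rw [closure, dif_pos h]
  simp [self_mem_closure]

lemma closure_trans : ∀ s t : List Bool, t ∈ closure s → closure t ⊆ closure s := by
  intro s
  generalize hn : s.length = n
  induction n using Nat.strong_induction_on generalizing s with
  | _ n ih =>
    subst hn
    intro t ht
    rw [closure] at ht
    split at ht
    · next h =>
      simp only [Finset.mem_union, Finset.mem_singleton] at ht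
      rcases ht with (rfl | ht) | ht
      · exact subset_refl _
      · have h2 : (red (s.take (s.length / 2))).length < s.length := by
          have := red_length_le (s.take (s.length / 2))
          simp [List.length_take] at *; omega
        refine subset_trans (ih _ h2 _ rfl t ht) ?_
        intro a ha; rw [closure, dif_pos h]
        simp only [Finset.mem_union]; exact Or.inl (Or.inr ha)
      · have h2 : (red (s.drop (s.length / 2))).length < s.length := by
          have := red_length_le (s.drop (s.length / 2))
          simp [List.length_drop] at *; omega
        refine subset_trans (ih _ h2 _ rfl t ht) ?_
        intro a ha; rw [closure, dif_pos h]
        simp only [Finset.mem_union]; exact Or.inr ha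
    · simp at ht; subst ht; exact subset_refl _

lemma length_le_of_mem_closure : ∀ s t : List Bool, t ∈ closure s → t.length ≤ s.length := by
  intro s
  generalize hn : s.length = n
  induction n using Nat.strong_induction_on generalizing s with
  | _ n ih =>
    subst hn
    intro t ht
    rw [closure] at ht
    split at ht
    · next h =>
      simp only [Finset.mem_union, Finset.mem_singleton] at ht
      rcases ht with (rfl | ht) | ht
      · exact le_refl _
      · have h2 : (red (s.take (s.length / 2))).length < s.length := by
          have := red_length_le (s.take (s.length / 2))
          simp [List.length_take] at *; omega
        exact le_trans (ih _ h2 _ rfl t ht) (le_of_lt h2)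
      · have h2 : (red (s.drop (s.length / 2))).length < s.length := by
          have := red_length_le (s.drop (s.length / 2))
          simp [List.length_drop] at *; omega
        exact le_trans (ih _ h2 _ rfl t ht) (le_of_lt h2)
    · simp at ht; subst ht; exact le_refl _

lemma red_pow2 {u : List Bool} {j : ℕ} (hu : u.length = 2 ^ j) :
    ∃ i ≤ j, (red u).length = 2 ^ i := by
  obtain ⟨c, hc⟩ := exists_rep_red u
  have heq : u.length = 2 ^ c * (red u).length := by
    conv_lhs => rw [hc]
    rw [rep_length]
  rw [hu] at heq
  have hdvd : (red u).length ∣ 2 ^ j := Dvd.intro_left _ heq.symm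
  obtain ⟨i, hij, hi⟩ := (Nat.dvd_prime_pow Nat.prime_two).mp hdvd
  exact ⟨i, hij, hi⟩

lemma half_lengths {s : List Bool} {j : ℕ} (hj : s.length = 2 ^ j) (h1 : 1 ≤ j) :
    (s.take (s.length / 2)).length = 2 ^ (j - 1) ∧
    (s.drop (s.length / 2)).length = 2 ^ (j - 1) := by
  have h2j : (2:ℕ) ^ j = 2 * 2 ^ (j - 1) := by
    rw [← pow_succ']; congr 1; omega
  have hp : 1 ≤ 2 ^ (j - 1) := Nat.one_le_two_pow
  constructor
  · rw [List.length_take, hj, h2j]; omega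
  · rw [List.length_drop, hj, h2j]; omega

lemma pow2_of_mem_closure : ∀ s t : List Bool, t ∈ closure s → (∀ j, s.length = 2 ^ j →
    ∃ i ≤ j, t.length = 2 ^ i) := by
  intro s
  generalize hn : s.length = n
  induction n using Nat.strong_induction_on generalizing s with
  | _ n ih =>
    subst hn
    intro t ht j hj
    rw [closure] at ht
    split at ht
    · next h =>
      have hj1 : 1 ≤ j := by
        by_contra hc
        have : j = 0 := by omega
        rw [this] at hj; simp at hj; omega
      obtain ⟨htl, hdl⟩ := half_lengths hj hj1
      simp only [Finset.mem_union, Finset.mem_singleton] at ht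
      rcases ht with (rfl | ht) | ht
      · exact ⟨j, le_refl _, hj⟩
      · obtain ⟨i, hij, hi⟩ := red_pow2 htl
        have hlt : (red (s.take (s.length / 2))).length < s.length := by
          have := red_length_le (s.take (s.length / 2))
          simp [List.length_take] at this ⊢; omega
        obtain ⟨i', hii', hi'⟩ := ih _ hlt _ rfl t ht i hi
        exact ⟨i', by omega, hi'⟩
      · obtain ⟨i, hij, hi⟩ := red_pow2 hdl
        have hlt : (red (s.drop (s.length / 2))).length < s.length := by
          have := red_length_le (s.drop (s.length / 2))
          simp [List.length_drop] at this ⊢; omega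
        obtain ⟨i', hii', hi'⟩ := ih _ hlt _ rfl t ht i hi
        exact ⟨i', by omega, hi'⟩
    · simp at ht; subst ht; exact ⟨j, le_refl _, hj⟩

lemma red_of_mem_closure : ∀ s t : List Bool, t ∈ closure s → red s = s → red t = t := by
  intro s
  generalize hn : s.length = n
  induction n using Nat.strong_induction_on generalizing s with
  | _ n ih =>
    subst hn
    intro t ht hs
    rw [closure] at ht
    split at ht
    · next h =>
      simp only [Finset.mem_union, Finset.mem_singleton] at ht
      rcases ht with (rfl | ht) | ht
      · exact hs
      · have hlt : (red (s.take (s.length / 2))).length < s.length := by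
          have := red_length_le (s.take (s.length / 2))
          simp [List.length_take] at this ⊢; omega
        exact ih _ hlt _ rfl t ht (red_red _)
      · have hlt : (red (s.drop (s.length / 2))).length < s.length := by
          have := red_length_le (s.drop (s.length / 2))
          simp [List.length_drop] at this ⊢; omega
        exact ih _ hlt _ rfl t ht (red_red _)
    · simp at ht; subst ht; exact hs

lemma mem_red_of_mem {b : Bool} : ∀ u : List Bool, b ∈ u → b ∈ red u := by
  intro u
  generalize hn : u.length = n
  induction n using Nat.strong_induction_on generalizing u with
  | _ n ih =>
    subst hn
    intro hb
    rw [red]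
    split
    · next h =>
      have h1 : 0 < u.length := List.length_pos_iff.mpr h.1
      have h2 : (u.take (u.length / 2)).length < u.length := by
        simp [List.length_take]; omega
      refine ih _ h2 _ rfl ?_
      have hb2 : b ∈ u.take (u.length / 2) ++ u.drop (u.length / 2) := by
        rw [List.take_append_drop]; exact hb
      rw [List.mem_append, ← h.2, or_self] at hb2
      exact hb2
    · exact hb

lemma singleton_mem_closure {b : Bool} : ∀ s : List Bool, b ∈ s → [b] ∈ closure s := by
  intro s
  generalize hn : s.length = n
  induction n using Nat.strong_induction_on generalizing s with
  | _ n ih =>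
    subst hn
    intro hb
    rw [closure]
    split
    · next h =>
      have hb2 : b ∈ s.take (s.length / 2) ∨ b ∈ s.drop (s.length / 2) := by
        rw [← List.mem_append, List.take_append_drop]; exact hb
      simp only [Finset.mem_union, Finset.mem_singleton]
      rcases hb2 with hb2 | hb2
      · have hlt : (red (s.take (s.length / 2))).length < s.length := by
          have := red_length_le (s.take (s.length / 2))
          simp [List.length_take] at this ⊢; omega
        exact Or.inl (Or.inr (ih _ hlt _ rfl (mem_red_of_mem _ hb2)))
      · have hlt : (red (s.drop (s.length / 2))).length < s.length := by
          have := red_length_le (s.drop (s.length / 2))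
          simp [List.length_drop] at this ⊢; omega
        exact Or.inr (ih _ hlt _ rfl (mem_red_of_mem _ hb2))
    · next h =>
      have : s.length ≤ 1 := by omega
      have h1 : 0 < s.length := List.length_pos_iff.mpr (by rintro rfl; simp at hb)
      interval_cases hl : s.length
      · match s, hl with
        | [a], _ =>
          simp at hb ⊢
          subst hb; rfl

lemma length_one_cases (s : List Bool) (h : s.length = 1) : s = [false] ∨ s = [true] := by
  match s, h with
  | [a], _ => cases a <;> simp

lemma two_le_length_of_sdyadic {x : List Bool} (hx : SDyadic x) : 2 ≤ x.length := by
  obtain ⟨-, -, hf, ht⟩ := hx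
  match x with
  | [] => simp at hf
  | [a] => simp at hf ht; rw [hf] at ht; exact absurd ht (by simp)
  | a :: b :: l => simp

section Construction

variable (x : List Bool)

abbrev Sub := {s : List Bool // s ∈ closure x}

def s0 (v : Sub x) : Sub x :=
  if h : 2 ≤ v.1.length then
    ⟨red (v.1.take (v.1.length / 2)), closure_trans x v.1 v.2 (mem_left_closure h)⟩
  else v

def s1 (v : Sub x) : Sub x :=
  if h : 2 ≤ v.1.length then
    ⟨red (v.1.drop (v.1.length / 2)), closure_trans x v.1 v.2 (mem_right_closure h)⟩
  else v

def Rel (a b : Sub x) : Prop := 2 ≤ a.1.length ∧ (b = s0 x a ∨ b = s1 x a)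

lemma reach_aux : ∀ (t s : Sub x), s.1 ∈ closure t.1 →
    Relation.ReflTransGen (Rel x) t s := by
  intro t
  generalize hn : t.1.length = n
  induction n using Nat.strong_induction_on generalizing t with
  | _ n ih =>
    subst hn
    intro s hs
    rw [closure] at hs
    split at hs
    · next h =>
      simp only [Finset.mem_union, Finset.mem_singleton] at hs
      rcases hs with (hs | hs) | hs
      · have : s = t := Subtype.ext hs
        rw [this]
      · have hu : (s0 x t).1 = red (t.1.take (t.1.length / 2)) := by
          rw [s0, dif_pos h]
        have hlt : (s0 x t).1.length < t.1.length := by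
          rw [hu]
          have := red_length_le (t.1.take (t.1.length / 2))
          simp [List.length_take] at this ⊢; omega
        refine Relation.ReflTransGen.head ⟨h, Or.inl rfl⟩ (ih _ hlt _ rfl s ?_)
        rw [hu]; exact hs
      · have hu : (s1 x t).1 = red (t.1.drop (t.1.length / 2)) := by
          rw [s1, dif_pos h]
        have hlt : (s1 x t).1.length < t.1.length := by
          rw [hu]
          have := red_length_le (t.1.drop (t.1.length / 2))
          simp [List.length_drop] at this ⊢; omega
        refine Relation.ReflTransGen.head ⟨h, Or.inr rfl⟩ (ih _ hlt _ rfl s ?_)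
        rw [hu]; exact hs
    · next h =>
      simp at hs
      have : s = t := hs
      rw [this]

end Construction

lemma exists_bdd_subtype (x : List Bool) (hx : SDyadic x) :
    ∃ (G : BDD (Sub x)) (φ : Sub x → List Bool),
      IsPhi G φ ∧ Function.Injective φ ∧ φ G.root = x := by
  have hx2 : 2 ≤ x.length := two_le_length_of_sdyadic hx
  set K := Nat.log 2 x.length with hKdef
  obtain ⟨⟨k0, hk0⟩, hxtd, hxf, hxt⟩ := hx
  have hxlen : x.length = 2 ^ K := by rw [hk0, hKdef, hk0, Nat.log_pow one_lt_two]
  have hK : 1 ≤ K := by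
    by_contra hc
    have : K = 0 := by omega
    rw [this] at hxlen; simp at hxlen; omega
  have hxnil : x ≠ [] := by intro h; rw [h] at hx2; simp at hx2
  have hxred : red x = x := (red_eq_self_iff x).mpr (by rintro ⟨-, h⟩; exact hxtd h)
  -- facts for members
  have hmem : ∀ v : Sub x, ∃ i ≤ K, v.1.length = 2 ^ i :=
    fun v => pow2_of_mem_closure x v.1 v.2 K hxlen
  have hredm : ∀ v : Sub x, red v.1 = v.1 :=
    fun v => red_of_mem_closure x v.1 v.2 hxred
  have hnilm : ∀ v : Sub x, v.1 ≠ [] := by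
    intro v h
    obtain ⟨i, -, hi⟩ := hmem v
    rw [h] at hi; simp at hi
    exact absurd hi.symm (by positivity)
  have hnt : ∀ v : Sub x, v.1 ≠ [false] → v.1 ≠ [true] → 2 ≤ v.1.length := by
    intro v h0 h1
    obtain ⟨i, -, hi⟩ := hmem v
    rcases Nat.eq_zero_or_pos i with rfl | hip
    · simp at hi
      rcases length_one_cases v.1 hi with h | h
      · exact absurd h h0
      · exact absurd h h1
    · rw [hi]
      calc 2 = 2 ^ 1 := by norm_num
      _ ≤ 2 ^ i := Nat.pow_le_pow_right (by norm_num) hip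
  have hT0mem : [false] ∈ closure x := singleton_mem_closure x hxf
  have hT1mem : [true] ∈ closure x := singleton_mem_closure x hxt
  set lvl : Sub x → ℕ := fun v => K + 1 - Nat.log 2 v.1.length with hlvl
  -- level of a member with length 2^i is K+1-i
  have hlvl2 : ∀ (v : Sub x) (i : ℕ), v.1.length = 2 ^ i → lvl v = K + 1 - i := by
    intro v i hi
    rw [hlvl]; simp only; rw [hi, Nat.log_pow one_lt_two]
  -- successor data for nonterminal vertices
  have hsucc : ∀ (v : Sub x), 2 ≤ v.1.length →
      ∀ i, v.1.length = 2 ^ i →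
      ∃ i0 a, (s0 x v).1.length = 2 ^ i0 ∧ a + i0 + 1 = i ∧
        v.1.take (v.1.length / 2) = rep (2 ^ a) (s0 x v).1 := by
    intro v h2 i hi
    have hi1 : 1 ≤ i := by
      by_contra hc
      have : i = 0 := by omega
      rw [this] at hi; simp at hi; omega
    have htl := (half_lengths hi hi1).1
    have hv0 : (s0 x v).1 = red (v.1.take (v.1.length / 2)) := by rw [s0, dif_pos h2]
    obtain ⟨i0, hi0le, hi0⟩ := red_pow2 htl
    obtain ⟨a, ha⟩ := exists_rep_red (v.1.take (v.1.length / 2))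
    refine ⟨i0, a, by rw [hv0]; exact hi0, ?_, by rw [hv0]; exact ha⟩
    have hlen := congrArg List.length ha
    rw [rep_length, hi0, htl] at hlen
    have h2 : (2:ℕ) ^ (i - 1) = 2 ^ (a + i0) := by rw [pow_add]; exact hlen
    have := Nat.pow_right_injective (le_refl 2) h2
    omega
  have hsucc1 : ∀ (v : Sub x), 2 ≤ v.1.length →
      ∀ i, v.1.length = 2 ^ i →
      ∃ i1 b, (s1 x v).1.length = 2 ^ i1 ∧ b + i1 + 1 = i ∧
        v.1.drop (v.1.length / 2) = rep (2 ^ b) (s1 x v).1 := by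
    intro v h2 i hi
    have hi1 : 1 ≤ i := by
      by_contra hc
      have : i = 0 := by omega
      rw [this] at hi; simp at hi; omega
    have htl := (half_lengths hi hi1).2
    have hv1 : (s1 x v).1 = red (v.1.drop (v.1.length / 2)) := by rw [s1, dif_pos h2]
    obtain ⟨i1, hi1le, hi1'⟩ := red_pow2 htl
    obtain ⟨b, hb⟩ := exists_rep_red (v.1.drop (v.1.length / 2))
    refine ⟨i1, b, by rw [hv1]; exact hi1', ?_, by rw [hv1]; exact hb⟩
    have hlen := congrArg List.length hb
    rw [rep_length, hi1', htl] at hlen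
    have h2' : (2:ℕ) ^ (i - 1) = 2 ^ (b + i1) := by rw [pow_add]; exact hlen
    have := Nat.pow_right_injective (le_refl 2) h2'
    omega
  have hntv : ∀ (v : Sub x), v ≠ (⟨[false], hT0mem⟩ : Sub x) → v ≠ (⟨[true], hT1mem⟩ : Sub x) →
      2 ≤ v.1.length := by
    intro v h0 h1
    exact hnt v (fun h => h0 (Subtype.ext h)) (fun h => h1 (Subtype.ext h))
  refine ⟨⟨K, ⟨x, self_mem_closure x⟩, ⟨[false], hT0mem⟩, ⟨[true], hT1mem⟩,
      s0 x, s1 x, lvl, hK, ?_, ?_, ?_, ?_, ?_, ?_, ?_, ?_, ?_⟩,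
      Subtype.val, ?_, fun a b h => Subtype.ext h, rfl⟩
  · -- T0_ne_T1
    intro h; simpa using congrArg Subtype.val h
  · -- root_level
    rw [hlvl2 _ K hxlen]; omega
  · -- T0_level
    rw [hlvl2 _ 0 (by simp)]; omega
  · -- T1_level
    rw [hlvl2 _ 0 (by simp)]; omega
  · -- level_le
    intro v; simp only [hlvl]; omega
  · -- succ_ne
    intro v h0 h1
    have h2 := hntv v h0 h1
    obtain ⟨i, hiK, hi⟩ := hmem v
    obtain ⟨i0, a, hi0, ha0, hrep0⟩ := hsucc v h2 i hi
    obtain ⟨i1, b, hi1, hb1, hrep1⟩ := hsucc1 v h2 i hi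
    intro heq
    have hval : (s0 x v).1 = (s1 x v).1 := by rw [heq]
    have : (2:ℕ) ^ i0 = 2 ^ i1 := by rw [← hi0, ← hi1, hval]
    have hii : i0 = i1 := Nat.pow_right_injective (le_refl 2) this
    have hab : a = b := by omega
    have : v.1.take (v.1.length / 2) = v.1.drop (v.1.length / 2) := by
      rw [hrep0, hrep1, hval, hab]
    exact (red_eq_self_iff v.1).mp (hredm v) ⟨hnilm v, this⟩
  · -- level_lt_succ0
    intro v h0 h1
    have h2 := hntv v h0 h1
    obtain ⟨i, hiK, hi⟩ := hmem v
    obtain ⟨i0, a, hi0, ha0, hrep0⟩ := hsucc v h2 i hi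
    rw [hlvl2 _ i hi, hlvl2 _ i0 hi0]
    omega
  · -- level_lt_succ1
    intro v h0 h1
    have h2 := hntv v h0 h1
    obtain ⟨i, hiK, hi⟩ := hmem v
    obtain ⟨i1, b, hi1, hb1, hrep1⟩ := hsucc1 v h2 i hi
    rw [hlvl2 _ i hi, hlvl2 _ i1 hi1]
    omega
  · -- reachable
    intro v
    refine Relation.ReflTransGen.mono ?_ _ _ (reach_aux x ⟨x, self_mem_closure x⟩ v v.2)
    rintro p q ⟨hp2, hpq⟩
    refine ⟨?_, ?_, hpq⟩
    · intro h; rw [h] at hp2; simp at hp2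
    · intro h; rw [h] at hp2; simp at hp2
  · -- IsPhi
    refine ⟨rfl, rfl, ?_⟩
    intro v h0 h1
    have h2 := hntv v h0 h1
    obtain ⟨i, hiK, hi⟩ := hmem v
    obtain ⟨i0, a, hi0, ha0, hrep0⟩ := hsucc v h2 i hi
    obtain ⟨i1, b, hi1, hb1, hrep1⟩ := hsucc1 v h2 i hi
    show v.1 = rep (2 ^ (lvl (s0 x v) - lvl v - 1)) (s0 x v).1
        ++ rep (2 ^ (lvl (s1 x v) - lvl v - 1)) (s1 x v).1
    have e0 : lvl (s0 x v) - lvl v - 1 = a := by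
      rw [hlvl2 _ i0 hi0, hlvl2 _ i hi]; omega
    have e1 : lvl (s1 x v) - lvl v - 1 = b := by
      rw [hlvl2 _ i1 hi1, hlvl2 _ i hi]; omega
    rw [e0, e1, ← hrep0, ← hrep1, List.take_append_drop]


lemma transport {V : Type} [Fintype V] [DecidableEq V] (G : BDD V) (φ : V → List Bool)
    (h1 : IsPhi G φ) (h2 : Function.Injective φ) :
    ∃ (m : ℕ) (G' : BDD (Fin m)) (φ' : Fin m → List Bool),
      IsPhi G' φ' ∧ Function.Injective φ' ∧ φ' G'.root = φ G.root := by
  let e := Fintype.equivFin V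
  refine ⟨Fintype.card V,
    ⟨G.k, e G.root, e G.T0, e G.T1,
      fun w => e (G.succ0 (e.symm w)), fun w => e (G.succ1 (e.symm w)),
      fun w => G.level (e.symm w), G.k_pos,
      by simp [G.T0_ne_T1, e.injective.ne_iff],
      by simp [G.root_level], by simp [G.T0_level], by simp [G.T1_level],
      fun w => G.level_le _, ?_, ?_, ?_, ?_⟩,
    fun w => φ (e.symm w), ?_, fun a b h => e.symm.injective (h2 h), by simp⟩
  · intro w hw0 hw1 heq
    exact G.succ_ne (e.symm w)
      (fun h => hw0 (show w = e G.T0 by rw [← h]; simp))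
      (fun h => hw1 (show w = e G.T1 by rw [← h]; simp))
      (e.injective heq)
  · intro w hw0 hw1
    refine G.level_lt_succ0 (e.symm w)
      (fun h => hw0 (show w = e G.T0 by rw [← h]; simp))
      (fun h => hw1 (show w = e G.T1 by rw [← h]; simp)) |>.trans_le (by simp)
  · intro w hw0 hw1
    refine G.level_lt_succ1 (e.symm w)
      (fun h => hw0 (show w = e G.T0 by rw [← h]; simp))
      (fun h => hw1 (show w = e G.T1 by rw [← h]; simp)) |>.trans_le (by simp)
  · -- reachable
    intro w
    have := Relation.ReflTransGen.lift e
      (r := fun a b => a ≠ G.T0 ∧ a ≠ G.T1 ∧ (b = G.succ0 a ∨ b = G.succ1 a))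
      (p := fun a b => a ≠ e G.T0 ∧ a ≠ e G.T1 ∧
        (b = e (G.succ0 (e.symm a)) ∨ b = e (G.succ1 (e.symm a))))
      ?_ _ _ (G.reachable (e.symm w))
    · simpa [Function.onFun] using this
    · rintro a b ⟨ha0, ha1, hab⟩
      refine ⟨by simp [e.injective.ne_iff, ha0], by simp [e.injective.ne_iff, ha1], ?_⟩
      rcases hab with rfl | rfl
      · left; simp
      · right; simp
  · -- IsPhi
    obtain ⟨hp0, hp1, hp⟩ := h1
    refine ⟨by simpa using hp0, by simpa using hp1, ?_⟩
    intro w hw0 hw1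
    have := hp (e.symm w) (fun h => hw0 (show w = e G.T0 by rw [← h]; simp))
      (fun h => hw1 (show w = e G.T1 by rw [← h]; simp))
    simpa using this

lemma exists_part (x : List Bool) (hx : SDyadic x) :
    ∃ (m : ℕ) (G : BDD (Fin m)) (φ : Fin m → List Bool),
      IsPhi G φ ∧ Function.Injective φ ∧ φ G.root = x := by
  obtain ⟨G, φ, h1, h2, h3⟩ := exists_bdd_subtype x hx
  obtain ⟨m, G', φ', h1', h2', h3'⟩ := transport G φ h1 h2
  exact ⟨m, G', φ', h1', h2', by rw [h3', h3]⟩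


section Uniq

variable {V : Type} [Fintype V] [DecidableEq V]

lemma red_singleton (b : Bool) : red [b] = [b] := by
  rw [red_eq_self_iff]
  rintro ⟨-, h⟩
  have h0 : ([b] : List Bool).length / 2 = 0 := by simp
  rw [h0, List.take_zero, List.drop_zero] at h
  exact absurd h (by simp)

lemma phi_spec (G : BDD V) (φ : V → List Bool) (h1 : IsPhi G φ)
    (h2 : Function.Injective φ) :
    ∀ v, (φ v).length = 2 ^ (G.k + 1 - G.level v) ∧ red (φ v) = φ v := by
  obtain ⟨hp0, hp1, hp⟩ := h1
  intro v
  generalize hn : G.k + 1 - G.level v = n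
  induction n using Nat.strong_induction_on generalizing v with
  | _ n ih =>
    subst hn
    by_cases hv0 : v = G.T0
    · subst hv0
      rw [hp0, G.T0_level]
      simp [red_singleton]
    by_cases hv1 : v = G.T1
    · subst hv1
      rw [hp1, G.T1_level]
      simp [red_singleton]
    have hrec := hp v hv0 hv1
    have hl0 := G.level_lt_succ0 v hv0 hv1
    have hl1 := G.level_lt_succ1 v hv0 hv1
    have hle0 := G.level_le (G.succ0 v)
    have hle1 := G.level_le (G.succ1 v)
    have m0 : G.k + 1 - G.level (G.succ0 v) < G.k + 1 - G.level v := by omega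
    have m1 : G.k + 1 - G.level (G.succ1 v) < G.k + 1 - G.level v := by omega
    obtain ⟨len0, red0⟩ := ih _ m0 _ rfl
    obtain ⟨len1, red1⟩ := ih _ m1 _ rfl
    set a0 := G.level (G.succ0 v) - G.level v - 1 with ha0
    set a1 := G.level (G.succ1 v) - G.level v - 1 with ha1
    have hrec' : φ v = rep (2 ^ a0) (φ (G.succ0 v)) ++ rep (2 ^ a1) (φ (G.succ1 v)) := hrec
    have hlA : (rep (2 ^ a0) (φ (G.succ0 v))).length = 2 ^ (G.k - G.level v) := by
      rw [rep_length, len0, ← pow_add]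
      congr 1
      omega
    have hlB : (rep (2 ^ a1) (φ (G.succ1 v))).length = 2 ^ (G.k - G.level v) := by
      rw [rep_length, len1, ← pow_add]
      congr 1
      omega
    have hlen : (φ v).length = 2 ^ (G.k + 1 - G.level v) := by
      rw [hrec', List.length_append, hlA, hlB, ← two_mul, ← pow_succ']
      congr 1
      omega
    refine ⟨hlen, ?_⟩
    rw [red_eq_self_iff]
    rintro ⟨hne, heq⟩
    rw [hrec', take_half_append _ _ (by rw [hlA, hlB]),
      drop_half_append _ _ (by rw [hlA, hlB])] at heq
    have hne0 : φ (G.succ0 v) ≠ [] := by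
      apply List.ne_nil_of_length_pos
      rw [len0]; positivity
    have hne1 : φ (G.succ1 v) ≠ [] := by
      apply List.ne_nil_of_length_pos
      rw [len1]; positivity
    have := red_rep_inj red0 red1 hne0 hne1 heq
    exact G.succ_ne v hv0 hv1 (h2 this)

lemma phi_succ (G : BDD V) (φ : V → List Bool) (h1 : IsPhi G φ)
    (h2 : Function.Injective φ) (v : V) (hv0 : v ≠ G.T0) (hv1 : v ≠ G.T1) :
    φ (G.succ0 v) = red ((φ v).take ((φ v).length / 2)) ∧
    φ (G.succ1 v) = red ((φ v).drop ((φ v).length / 2)) ∧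
    2 ≤ (φ v).length := by
  obtain ⟨hp0, hp1, hp⟩ := h1
  have hrec := hp v hv0 hv1
  have hl0 := G.level_lt_succ0 v hv0 hv1
  have hl1 := G.level_lt_succ1 v hv0 hv1
  have hle0 := G.level_le (G.succ0 v)
  have hle1 := G.level_le (G.succ1 v)
  obtain ⟨len0, red0⟩ := phi_spec G φ ⟨hp0, hp1, hp⟩ h2 (G.succ0 v)
  obtain ⟨len1, red1⟩ := phi_spec G φ ⟨hp0, hp1, hp⟩ h2 (G.succ1 v)
  obtain ⟨lenv, redv⟩ := phi_spec G φ ⟨hp0, hp1, hp⟩ h2 v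
  set a0 := G.level (G.succ0 v) - G.level v - 1 with ha0
  set a1 := G.level (G.succ1 v) - G.level v - 1 with ha1
  have hrec' : φ v = rep (2 ^ a0) (φ (G.succ0 v)) ++ rep (2 ^ a1) (φ (G.succ1 v)) := hrec
  have hlA : (rep (2 ^ a0) (φ (G.succ0 v))).length = 2 ^ (G.k - G.level v) := by
    rw [rep_length, len0, ← pow_add]; congr 1; omega
  have hlB : (rep (2 ^ a1) (φ (G.succ1 v))).length = 2 ^ (G.k - G.level v) := by
    rw [rep_length, len1, ← pow_add]; congr 1; omega
  have hne0 : φ (G.succ0 v) ≠ [] := by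
    apply List.ne_nil_of_length_pos; rw [len0]; positivity
  have hne1 : φ (G.succ1 v) ≠ [] := by
    apply List.ne_nil_of_length_pos; rw [len1]; positivity
  refine ⟨?_, ?_, ?_⟩
  · rw [hrec', take_half_append _ _ (by rw [hlA, hlB]), red_rep _ red0 hne0]
  · rw [hrec', drop_half_append _ _ (by rw [hlA, hlB]), red_rep _ red1 hne1]
  · rw [lenv]
    have : 1 ≤ G.k + 1 - G.level v := by omega
    calc 2 = 2 ^ 1 := by norm_num
    _ ≤ _ := Nat.pow_le_pow_right (by norm_num) this

lemma phi_mem (G : BDD V) (φ : V → List Bool) (h1 : IsPhi G φ)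
    (h2 : Function.Injective φ) (v : V) : φ v ∈ closure (φ G.root) := by
  have hr := G.reachable v
  induction hr with
  | refl => exact self_mem_closure _
  | tail hab step ih =>
    obtain ⟨hb0, hb1, hc⟩ := step
    obtain ⟨hs0, hs1, hb2⟩ := phi_succ G φ h1 h2 _ hb0 hb1
    rcases hc with rfl | rfl
    · rw [hs0]
      exact closure_trans _ _ ih (mem_left_closure hb2)
    · rw [hs1]
      exact closure_trans _ _ ih (mem_right_closure hb2)

lemma phi_surj (G : BDD V) (φ : V → List Bool) (h1 : IsPhi G φ)
    (h2 : Function.Injective φ) :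
    ∀ (t : List Bool), (∃ v, φ v = t) → ∀ s ∈ closure t, ∃ v, φ v = s := by
  intro t
  generalize hn : t.length = n
  induction n using Nat.strong_induction_on generalizing t with
  | _ n ih =>
    subst hn
    rintro ⟨u, rfl⟩ s hs
    rw [closure] at hs
    split at hs
    · next h =>
      have hu0 : u ≠ G.T0 := by
        intro hu; rw [hu, h1.1] at h; simp at h
      have hu1 : u ≠ G.T1 := by
        intro hu; rw [hu, h1.2.1] at h; simp at h
      obtain ⟨hs0, hs1, -⟩ := phi_succ G φ h1 h2 u hu0 hu1
      simp only [Finset.mem_union, Finset.mem_singleton] at hs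
      rcases hs with (rfl | hs) | hs
      · exact ⟨u, rfl⟩
      · have hlt : (red ((φ u).take ((φ u).length / 2))).length < (φ u).length := by
          have := red_length_le ((φ u).take ((φ u).length / 2))
          simp [List.length_take] at this ⊢; omega
        exact ih _ hlt _ rfl ⟨G.succ0 u, hs0⟩ s hs
      · have hlt : (red ((φ u).drop ((φ u).length / 2))).length < (φ u).length := by
          have := red_length_le ((φ u).drop ((φ u).length / 2))
          simp [List.length_drop] at this ⊢; omega
        exact ih _ hlt _ rfl ⟨G.succ1 u, hs1⟩ s hs
    · simp at hs; subst hs; exact ⟨u, rfl⟩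

end Uniq

lemma uniq_part (x : List Bool) (m m' : ℕ) (G : BDD (Fin m)) (G' : BDD (Fin m'))
    (φ : Fin m → List Bool) (φ' : Fin m' → List Bool)
    (h1 : IsPhi G φ) (h2 : Function.Injective φ) (h3 : φ G.root = x)
    (h1' : IsPhi G' φ') (h2' : Function.Injective φ') (h3' : φ' G'.root = x) :
    ∃ e : Fin m ≃ Fin m', BDDIso G G' e := by
  have hmem : ∀ v, φ v ∈ closure x := by
    intro v; rw [← h3]; exact phi_mem G φ h1 h2 v
  have hmem' : ∀ v, φ' v ∈ closure x := by
    intro v; rw [← h3']; exact phi_mem G' φ' h1' h2' v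
  have hsurj : ∀ s ∈ closure x, ∃ v, φ v = s := by
    intro s hs
    exact phi_surj G φ h1 h2 x ⟨G.root, h3⟩ s hs
  have hsurj' : ∀ s ∈ closure x, ∃ v, φ' v = s := by
    intro s hs
    exact phi_surj G' φ' h1' h2' x ⟨G'.root, h3'⟩ s hs
  choose f hf using fun v => hsurj' (φ v) (hmem v)
  choose g hg using fun v => hsurj (φ' v) (hmem' v)
  have hgf : ∀ v, g (f v) = v := fun v => h2 (by rw [hg, hf])
  have hfg : ∀ v, f (g v) = v := fun v => h2' (by rw [hf, hg])
  set e : Fin m ≃ Fin m' := ⟨f, g, hgf, hfg⟩ with he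
  -- k's agree
  have hk : G.k = G'.k := by
    have l1 := (phi_spec G φ h1 h2 G.root).1
    have l2 := (phi_spec G' φ' h1' h2' G'.root).1
    rw [h3, G.root_level] at l1
    rw [h3', G'.root_level] at l2
    have : (2:ℕ) ^ (G.k + 1 - 1) = 2 ^ (G'.k + 1 - 1) := by rw [← l1, ← l2]
    have := Nat.pow_right_injective (le_refl 2) this
    omega
  have hlev : ∀ v, G'.level (f v) = G.level v := by
    intro v
    have l1 := (phi_spec G φ h1 h2 v).1
    have l2 := (phi_spec G' φ' h1' h2' (f v)).1
    rw [hf v, l1] at l2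
    have := Nat.pow_right_injective (le_refl 2) l2
    have b1 := G.level_le v
    have b2 := G'.level_le (f v)
    omega
  have hT0 : f G.T0 = G'.T0 := by
    apply h2'
    rw [hf, h1.1, h1'.1]
  have hT1 : f G.T1 = G'.T1 := by
    apply h2'
    rw [hf, h1.2.1, h1'.2.1]
  have hnt : ∀ v, v ≠ G.T0 → v ≠ G.T1 → f v ≠ G'.T0 ∧ f v ≠ G'.T1 := by
    intro v hv0 hv1
    constructor
    · intro h
      apply hv0
      apply h2
      have : φ' (f v) = φ' G'.T0 := by rw [h]
      rw [hf, h1'.1, ← h1.1] at this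
      exact this
    · intro h
      apply hv1
      apply h2
      have : φ' (f v) = φ' G'.T1 := by rw [h]
      rw [hf, h1'.2.1, ← h1.2.1] at this
      exact this
  refine ⟨e, ?_, hT0, hT1, hlev, ?_⟩
  · apply h2'
    show φ' (f G.root) = φ' G'.root
    rw [hf, h3, h3']
  · intro v hv0 hv1
    obtain ⟨hw0, hw1⟩ := hnt v hv0 hv1
    obtain ⟨hs0, hs1, -⟩ := phi_succ G φ h1 h2 v hv0 hv1
    obtain ⟨hs0', hs1', -⟩ := phi_succ G' φ' h1' h2' (f v) hw0 hw1
    constructor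
    · apply h2'
      show φ' (f (G.succ0 v)) = φ' (G'.succ0 (f v))
      rw [hf, hs0, hs0', hf]
    · apply h2'
      show φ' (f (G.succ1 v)) = φ' (G'.succ1 (f v))
      rw [hf, hs1, hs1', hf]

end ROBP

/-- For each `x ∈ S(dyadic)` there exists a graph `G ∈ 𝒢*` (a `BDD` whose canonical map
is injective) with `φ_G(V_G^r) = x`, and it is unique up to isomorphism: the ROBDD
representing `x`. -/
theorem exists_unique_ROBDD (x : List Bool) (hx : SDyadic x) :
    (∃ (m : ℕ) (G : BDD (Fin m)) (φ : Fin m → List Bool),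
      IsPhi G φ ∧ Function.Injective φ ∧ φ G.root = x) ∧
    (∀ (m m' : ℕ) (G : BDD (Fin m)) (G' : BDD (Fin m'))
        (φ : Fin m → List Bool) (φ' : Fin m' → List Bool),
      IsPhi G φ → Function.Injective φ → φ G.root = x →
      IsPhi G' φ' → Function.Injective φ' → φ' G'.root = x →
      ∃ e : Fin m ≃ Fin m', BDDIso G G' e) := by
  refine ⟨ROBP.exists_part x hx, ?_⟩
  intro m m' G G' φ φ' a b c d e f
  exact ROBP.uniq_part x m m' G G' φ φ' a b c d e f
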